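/- arXiv:1909.11880 — 3 statements merged into one kernel-verified Lean document; each statement's English description precedes it below -/
import Mathlib

section
/- For every n, every occurrence of Wₙ in the infinite word W is immediately followed by either Wₙ or 1Wₙ: if Wₙ occurs in W at position j, then either Wₙ occurs in W at position j + |Wₙ|, or W(j + |Wₙ|) = 1 and Wₙ occurs in W at position j + |Wₙ| + 1. -/
open Filter

/-- The Chacón words: `W₀ = 0`, `W_{n+1} = Wₙ Wₙ 1 Wₙ`. -/
def chaconWord : ℕ → List (Fin 2)
  | 0 => [0]
  | n + 1 => chaconWord n ++ chaconWord n ++ [1] ++ chaconWord n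

/-- `W` is the infinite word having every `Wₙ` as an initial segment. -/
def IsChaconInfWord (W : ℕ → Fin 2) : Prop :=
  ∀ n i, i < (chaconWord n).length → W i = (chaconWord n).getD i 0

/-- A finite word `α` occurs in a finite word `β` at position `j`. -/
def OccursAt (α β : List (Fin 2)) (j : ℕ) : Prop :=
  j + α.length ≤ β.length ∧ ∀ k < α.length, β.getD (j + k) 0 = α.getD k 0

/-- A finite word `α` occurs in the infinite word `W` at position `j`. -/
def OccursAtInf (W : ℕ → Fin 2) (α : List (Fin 2)) (j : ℕ) : Prop :=
  ∀ k < α.length, W (j + k) = α.getD k 0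

/-- The subword of the infinite word `W` of length `L` beginning at position `i`. -/
def subword (W : ℕ → Fin 2) (i L : ℕ) : List (Fin 2) :=
  (List.range L).map fun k => W (i + k)

/-- The (normalized) Hamming distance `d` of two finite words. -/
noncomputable def hamming (α β : List (Fin 2)) : ℝ :=
  (((Finset.range α.length).filter fun i => α.getD i 0 ≠ β.getD i 0).card : ℝ) / α.length

/-- The modified 0-Hamming distance `d₀` of two finite words. -/
noncomputable def hamming0 (α β : List (Fin 2)) : ℝ :=
  (((Finset.range α.length).filter fun i => α.getD i 0 = 0 ∧ β.getD i 0 = 1).card : ℝ) /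
    (((Finset.range α.length).filter fun i => α.getD i 0 = 0).card : ℝ)

namespace ChaconAux

lemma fin2_cases (x : Fin 2) : x = 0 ∨ x = 1 := by
  fin_cases x
  · exact Or.inl rfl
  · exact Or.inr rfl

lemma fin2_zero_ne_one : (0 : Fin 2) ≠ 1 := by decide

lemma chacon_succ (n : ℕ) :
    chaconWord (n + 1) = ((chaconWord n ++ chaconWord n) ++ [1]) ++ chaconWord n := by
  simp [chaconWord]

lemma len_succ (n : ℕ) :
    (chaconWord (n + 1)).length = 3 * (chaconWord n).length + 1 := by
  rw [chacon_succ]; simp; ring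

lemma len_pos (n : ℕ) : 0 < (chaconWord n).length := by
  induction n with
  | zero => simp [chaconWord]
  | succ n ih => rw [len_succ]; omega

lemma len_ge (n : ℕ) : n + 1 ≤ (chaconWord n).length := by
  induction n with
  | zero => simp [chaconWord]
  | succ n ih => rw [len_succ]; omega

/-- getD of `chaconWord (n+1)` in terms of pieces. -/
lemma getD_chacon_succ (n t : ℕ) :
    (chaconWord (n + 1)).getD t 0 =
      if t < (chaconWord n).length then (chaconWord n).getD t 0
      else if t < 2 * (chaconWord n).length then
        (chaconWord n).getD (t - (chaconWord n).length) 0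
      else if t = 2 * (chaconWord n).length then 1
      else (chaconWord n).getD (t - (2 * (chaconWord n).length + 1)) 0 := by
  have hA : chaconWord (n + 1) = ((chaconWord n ++ chaconWord n) ++ [1]) ++ chaconWord n :=
    chacon_succ n
  rw [hA]
  split_ifs with h1' h2' h3'
  · rw [List.getD_append _ _ _ _ (by simp; omega),
      List.getD_append _ _ _ _ (by simp; omega),
      List.getD_append _ _ _ _ h1']
  · rw [List.getD_append _ _ _ _ (by simp; omega),
      List.getD_append _ _ _ _ (by simp; omega),
      List.getD_append_right _ _ _ _ (by omega)]
  · rw [List.getD_append _ _ _ _ (by simp; omega),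
      List.getD_append_right _ _ _ _ (by simp; omega)]
    have e0 : t - (chaconWord n ++ chaconWord n).length = 0 := by simp; omega
    rw [e0]
    rfl
  · rw [List.getD_append_right _ _ _ _ (by simp; omega)]
    have e0 : ((chaconWord n ++ chaconWord n) ++ [1]).length =
        2 * (chaconWord n).length + 1 := by simp; omega
    rw [e0]

lemma head_eq (n : ℕ) : (chaconWord n).getD 0 0 = 0 := by
  induction n with
  | zero => rfl
  | succ n ih =>
    rw [getD_chacon_succ]
    have := len_pos n
    rw [if_pos (by omega)]
    exact ih

lemma last_eq (n : ℕ) : (chaconWord n).getD ((chaconWord n).length - 1) 0 = 0 := by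
  induction n with
  | zero => rfl
  | succ n ih =>
    have hL := len_pos n
    rw [len_succ, getD_chacon_succ]
    rw [if_neg (by omega), if_neg (by omega), if_neg (by omega)]
    have : 3 * (chaconWord n).length + 1 - 1 - (2 * (chaconWord n).length + 1) =
        (chaconWord n).length - 1 := by omega
    rw [this]
    exact ih

/-- No `11` in any `chaconWord m`. -/
lemma no11_fin (m : ℕ) : ∀ i, (chaconWord m).getD i 0 = 1 →
    (chaconWord m).getD (i + 1) 0 = 0 := by
  induction m with
  | zero =>
    intro i h
    exfalso
    cases i <;> simp [chaconWord, List.getD] at h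
  | succ m ih =>
    intro i h
    have hL := len_pos m
    set L := (chaconWord m).length with hLdef
    rw [getD_chacon_succ] at h ⊢
    rcases lt_trichotomy (i + 1) L with hc | hc | hc
    · rw [if_pos (by omega)] at h ⊢
      exact ih i h
    · rw [if_neg (by omega), if_pos (by omega)]
      have : i + 1 - L = 0 := by omega
      rw [this]; exact head_eq m
    · rcases lt_trichotomy (i + 1) (2 * L) with hd | hd | hd
      · by_cases hi : i < L
        · -- then i = L - 1? i+1 > L and i < L impossible since i+1 ≥ L+1 → i ≥ L
          omega
        · rw [if_neg (by omega), if_pos (by omega)] at h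
          rw [if_neg (by omega), if_pos (by omega)]
          have e1 : i + 1 - L = (i - L) + 1 := by omega
          rw [e1]
          exact ih _ h
      · -- i + 1 = 2L, so i = 2L - 1, in second block at offset L - 1 : value 0, contra
        exfalso
        rw [if_neg (by omega), if_pos (by omega)] at h
        have e1 : i - L = L - 1 := by omega
        rw [e1, last_eq m] at h
        exact fin2_zero_ne_one h
      · rcases Nat.lt_or_ge i (2 * L + 1) with he | he
        · -- i = 2L, i+1 = 2L+1 : value A[0] = 0
          rw [if_neg (by omega), if_neg (by omega), if_neg (by omega)]
          have e1 : i + 1 - (2 * L + 1) = 0 := by omega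
          rw [e1]; exact head_eq m
        · rw [if_neg (by omega), if_neg (by omega), if_neg (by omega)] at h
          rw [if_neg (by omega), if_neg (by omega), if_neg (by omega)]
          have e1 : i + 1 - (2 * L + 1) = (i - (2 * L + 1)) + 1 := by omega
          rw [e1]
          exact ih _ h

section W

variable {W : ℕ → Fin 2}

lemma W_no11 (hW : IsChaconInfWord W) (p : ℕ) (h : W p = 1) : W (p + 1) = 0 := by
  have hl := len_ge (p + 2)
  have h1 := hW (p + 2) p (by omega)
  have h2 := hW (p + 2) (p + 1) (by omega)
  rw [h2]
  exact no11_fin (p + 2) p (h1 ▸ h)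

/-- The substitution `0 ↦ 0010`, `1 ↦ 1`. -/
def sig (a : Fin 2) : List (Fin 2) := if a = 0 then [0, 0, 1, 0] else [1]

def Lsig (l : List (Fin 2)) : List (Fin 2) := l.flatMap sig

lemma Lsig_append (l l' : List (Fin 2)) : Lsig (l ++ l') = Lsig l ++ Lsig l' := by
  simp [Lsig]

lemma Lsig_singleton (a : Fin 2) : Lsig [a] = sig a := by simp [Lsig]

lemma Lsig_chacon (m : ℕ) : Lsig (chaconWord m) = chaconWord (m + 1) := by
  induction m with
  | zero => rfl
  | succ m ih =>
    have h1 : Lsig [1] = [1] := by decide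
    conv_lhs => rw [chacon_succ m]
    rw [Lsig_append, Lsig_append, Lsig_append, ih, h1]
    exact (chacon_succ (m + 1)).symm

/-- length of a block. -/
def bl (a : Fin 2) : ℕ := (sig a).length

lemma bl_pos (a : Fin 2) : 0 < bl a := by
  rcases fin2_cases a with h | h <;> simp [h, bl, sig]

/-- Cut positions of the level-1 block decomposition of `W`. -/
def cut (W : ℕ → Fin 2) : ℕ → ℕ
  | 0 => 0
  | p + 1 => cut W p + bl (W p)

lemma cut_eq (hW : IsChaconInfWord W) (m : ℕ) :
    ∀ p, p ≤ (chaconWord m).length →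
      cut W p = (Lsig ((chaconWord m).take p)).length := by
  intro p
  induction p with
  | zero => intro _; simp [cut, Lsig]
  | succ p ih =>
    intro hp
    have hplt : p < (chaconWord m).length := by omega
    have e1 : (chaconWord m).take (p + 1) =
        (chaconWord m).take p ++ [(chaconWord m)[p]] := by
      rw [List.take_succ]
      congr 1
      rw [List.getElem?_eq_getElem hplt]
      rfl
    have e2 : W p = (chaconWord m)[p] := by
      rw [hW m p hplt, List.getD_eq_getElem _ _ hplt]
    rw [show cut W (p + 1) = cut W p + bl (W p) from rfl, ih (by omega), e1, Lsig_append,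
      Lsig_singleton, List.length_append, e2, bl]

/-- The letters inside the level-1 block of `p`. -/
lemma block1 (hW : IsChaconInfWord W) (p t : ℕ) (ht : t < bl (W p)) :
    W (cut W p + t) = (sig (W p)).getD t 0 := by
  set m := p + 1 with hm
  have hplt : p < (chaconWord m).length := by have := len_ge m; omega
  have hc : cut W p = (Lsig ((chaconWord m).take p)).length := cut_eq hW m p (by omega)
  have e2 : W p = (chaconWord m)[p] := by
    rw [hW m p hplt, List.getD_eq_getElem _ _ hplt]
  have hdecomp : chaconWord (m + 1) =
      Lsig ((chaconWord m).take p) ++ (sig (W p) ++ Lsig ((chaconWord m).drop (p + 1))) := by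
    rw [← Lsig_chacon m]
    conv_lhs => rw [← List.take_append_drop p (chaconWord m)]
    rw [Lsig_append]
    congr 1
    rw [List.drop_eq_getElem_cons hplt, e2]
    simp only [Lsig, List.flatMap_cons]
  have hlen : cut W p + t < (chaconWord (m + 1)).length := by
    rw [hdecomp]
    simp only [List.length_append]
    have : t < (sig (W p)).length := ht
    omega
  rw [hW (m + 1) _ hlen, hdecomp,
    List.getD_append_right _ _ _ _ (by rw [← hc]; omega)]
  rw [show cut W p + t - (Lsig ((chaconWord m).take p)).length = t by omega]
  rw [List.getD_append _ _ _ _ ht]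

lemma block1_0 (hW : IsChaconInfWord W) {p : ℕ} (hp : W p = 0) :
    W (cut W p) = 0 ∧ W (cut W p + 1) = 0 ∧ W (cut W p + 2) = 1 ∧ W (cut W p + 3) = 0 := by
  refine ⟨?_, ?_, ?_, ?_⟩
  · have := block1 hW p 0 (by simp [bl, hp, sig]); simpa [hp, sig] using this
  · have := block1 hW p 1 (by simp [bl, hp, sig]); simpa [hp, sig] using this
  · have := block1 hW p 2 (by simp [bl, hp, sig]); simpa [hp, sig] using this
  · have := block1 hW p 3 (by simp [bl, hp, sig]); simpa [hp, sig] using this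

lemma block1_1 (hW : IsChaconInfWord W) {p : ℕ} (hp : W p = 1) : W (cut W p) = 1 := by
  have := block1 hW p 0 (bl_pos _)
  simpa [hp, sig] using this

lemma cut_cover (q : ℕ) : ∃ p t, t < bl (W p) ∧ q = cut W p + t := by
  induction q with
  | zero => exact ⟨0, 0, bl_pos _, rfl⟩
  | succ q ih =>
    obtain ⟨p, t, ht, he⟩ := ih
    by_cases h : t + 1 < bl (W p)
    · exact ⟨p, t + 1, h, by omega⟩
    · refine ⟨p + 1, 0, bl_pos _, ?_⟩
      have : t + 1 = bl (W p) := by omega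
      show q + 1 = cut W p + bl (W p) + 0
      omega

/-- Level-`n` cut positions. -/
def cutn (W : ℕ → Fin 2) : ℕ → ℕ → ℕ
  | 0 => fun p => p
  | n + 1 => fun p => cutn W n (cut W p)

lemma cutn_step (hW : IsChaconInfWord W) (n : ℕ) : ∀ p,
    cutn W n (p + 1) = cutn W n p + (if W p = 0 then (chaconWord n).length else 1) := by
  induction n with
  | zero =>
    intro p
    simp only [cutn]
    rcases fin2_cases (W p) with h | h <;> simp [h, chaconWord]
  | succ n ih =>
    intro p
    show cutn W n (cut W (p + 1)) = cutn W n (cut W p) + _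
    rw [show cut W (p + 1) = cut W p + bl (W p) from rfl]
    rcases fin2_cases (W p) with h | h
    · obtain ⟨h0, h1, h2, h3⟩ := block1_0 hW h
      rw [if_pos h]
      have e : bl (W p) = 4 := by simp [bl, h, sig]
      rw [e]
      rw [show cut W p + 4 = (cut W p + 3) + 1 from rfl, ih, h3, if_pos rfl]
      rw [show cut W p + 3 = (cut W p + 2) + 1 from rfl, ih, h2, if_neg (by decide)]
      rw [show cut W p + 2 = (cut W p + 1) + 1 from rfl, ih, h1, if_pos rfl]
      rw [show cut W p + 1 = (cut W p) + 1 from rfl, ih, h0, if_pos rfl]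
      rw [len_succ]
      ring
    · have e : bl (W p) = 1 := by simp [bl, h, sig]
      rw [e, ih, block1_1 hW h, h, if_neg (by decide), if_neg (by decide)]

lemma cutn_strictMono (hW : IsChaconInfWord W) (n : ℕ) : StrictMono (cutn W n) := by
  apply strictMono_nat_of_lt_succ
  intro p
  rw [cutn_step hW n p]
  have := len_pos n
  split_ifs <;> omega

lemma blockn1 (hW : IsChaconInfWord W) (n : ℕ) : ∀ p, W p = 1 → W (cutn W n p) = 1 := by
  induction n with
  | zero => intro p hp; exact hp
  | succ n ih => intro p hp; exact ih _ (block1_1 hW hp)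

lemma blockn0 (hW : IsChaconInfWord W) (n : ℕ) : ∀ p, W p = 0 →
    ∀ t < (chaconWord n).length, W (cutn W n p + t) = (chaconWord n).getD t 0 := by
  induction n with
  | zero =>
    intro p hp t ht
    have ht0 : t = 0 := by simp [chaconWord] at ht; omega
    subst ht0
    simpa [cutn, chaconWord] using hp
  | succ n ih =>
    intro p hp t ht
    have hL := len_pos n
    set L := (chaconWord n).length with hLdef
    obtain ⟨h0, h1, h2, h3⟩ := block1_0 hW hp
    set c := cut W p with hc
    have s1 : cutn W n (c + 1) = cutn W n c + L := by rw [cutn_step hW, h0, if_pos rfl]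
    have s2 : cutn W n (c + 2) = cutn W n c + 2 * L := by
      rw [show c + 2 = (c + 1) + 1 from rfl, cutn_step hW, h1, if_pos rfl, s1]; ring
    have s3 : cutn W n (c + 3) = cutn W n c + 2 * L + 1 := by
      rw [show c + 3 = (c + 2) + 1 from rfl, cutn_step hW, h2,
        if_neg (by decide), s2]
    have hcc : cutn W (n + 1) p = cutn W n c := rfl
    rw [len_succ] at ht
    rw [getD_chacon_succ, hcc]
    split_ifs with d1 d2 d3
    · exact ih c h0 t d1
    · have e : cutn W n c + t = cutn W n (c + 1) + (t - L) := by rw [s1]; omega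
      rw [e]
      exact ih (c + 1) h1 (t - L) (by omega)
    · have e : cutn W n c + t = cutn W n (c + 2) := by rw [s2]; omega
      rw [e]
      exact blockn1 hW n _ h2
    · have e : cutn W n c + t = cutn W n (c + 3) + (t - (2 * L + 1)) := by rw [s3]; omega
      rw [e]
      exact ih (c + 3) h3 (t - (2 * L + 1)) (by omega)

/-- One-level recognizability: `0010` occurs only at cut positions of `0`-blocks. -/
lemma rec1 (hW : IsChaconInfWord W) (q : ℕ) (h0 : W q = 0) (h1 : W (q + 1) = 0)
    (h2 : W (q + 2) = 1) (h3 : W (q + 3) = 0) : ∃ p, W p = 0 ∧ q = cut W p := by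
  obtain ⟨p, t, ht, he⟩ := cut_cover (W := W) (q + 2)
  rcases fin2_cases (W p) with hp | hp
  · obtain ⟨b0, b1, b2, b3⟩ := block1_0 hW hp
    have e : bl (W p) = 4 := by simp [bl, hp, sig]
    rw [e] at ht
    interval_cases t
    · exfalso; rw [show cut W p + 0 = cut W p by omega] at he
      rw [← he] at b0; rw [h2] at b0; exact fin2_zero_ne_one b0.symm
    · exfalso; rw [← he] at b1; rw [h2] at b1; exact fin2_zero_ne_one b1.symm
    · exact ⟨p, hp, by omega⟩
    · exfalso; rw [← he] at b3; rw [h2] at b3; exact fin2_zero_ne_one b3.symm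
  · have e : bl (W p) = 1 := by simp [bl, hp, sig]
    rw [e] at ht
    interval_cases t
    exfalso
    rw [Nat.add_zero] at he
    match p, he with
    | p' + 1, he =>
      rcases fin2_cases (W p') with hp' | hp'
      · obtain ⟨b0, b1, b2, b3⟩ := block1_0 hW hp'
        have e' : q + 2 = cut W p' + 4 := by
          rw [he]; show cut W p' + bl (W p') = _; simp [bl, hp', sig]
        have : q = cut W p' + 2 := by omega
        rw [← this] at b2
        rw [h0] at b2; exact fin2_zero_ne_one b2
      · have e' : q + 2 = cut W p' + 1 := by
          rw [he]; show cut W p' + bl (W p') = _; simp [bl, hp', sig]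
        have b := block1_1 hW hp'
        have : cut W p' = q + 1 := by omega
        rw [this, h1] at b
        exact fin2_zero_ne_one b

/-- Full recognizability. -/
lemma recn (hW : IsChaconInfWord W) (n : ℕ) : ∀ q, OccursAtInf W (chaconWord n) q →
    ∃ p, W p = 0 ∧ q = cutn W n p := by
  induction n with
  | zero =>
    intro q hocc
    have := hocc 0 (by simp [chaconWord])
    refine ⟨q, ?_, rfl⟩
    simpa [chaconWord] using this
  | succ n ih =>
    intro q hocc
    have hL := len_pos n
    set L := (chaconWord n).length with hLdef
    have hlen : (chaconWord (n + 1)).length = 3 * L + 1 := len_succ n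
    have occA : OccursAtInf W (chaconWord n) q := by
      intro k hk
      have := hocc k (by omega)
      rw [getD_chacon_succ, if_pos hk] at this
      exact this
    have occB : OccursAtInf W (chaconWord n) (q + L) := by
      intro k hk
      have := hocc (L + k) (by omega)
      rw [getD_chacon_succ, if_neg (by omega), if_pos (by omega)] at this
      rw [show L + k - L = k by omega] at this
      rw [show q + L + k = q + (L + k) by omega]
      exact this
    have h2L : W (q + 2 * L) = 1 := by
      have := hocc (2 * L) (by omega)
      rw [getD_chacon_succ, if_neg (by omega), if_neg (by omega), if_pos rfl] at this
      exact this
    have occC : OccursAtInf W (chaconWord n) (q + 2 * L + 1) := by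
      intro k hk
      have := hocc (2 * L + 1 + k) (by omega)
      rw [getD_chacon_succ, if_neg (by omega), if_neg (by omega), if_neg (by omega)] at this
      rw [show 2 * L + 1 + k - (2 * L + 1) = k by omega] at this
      rw [show q + 2 * L + 1 + k = q + (2 * L + 1 + k) by omega]
      exact this
    obtain ⟨a, ha0, hqa⟩ := ih q occA
    obtain ⟨b, hb0, hqb⟩ := ih _ occB
    obtain ⟨d, hd0, hqd⟩ := ih _ occC
    have hinj := (cutn_strictMono hW n).injective
    have hb' : b = a + 1 := by
      apply hinj
      rw [← hqb, cutn_step hW, if_pos ha0, ← hqa]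
    have ha1 : W (a + 1) = 0 := hb' ▸ hb0
    have s2 : cutn W n (a + 2) = q + 2 * L := by
      rw [show a + 2 = (a + 1) + 1 from rfl, cutn_step hW, if_pos ha1,
        show a + 1 = a + 1 from rfl, cutn_step hW, if_pos ha0, ← hqa]
      ring
    have ha2 : W (a + 2) = 1 := by
      rcases fin2_cases (W (a + 2)) with h | h
      · exfalso
        have := blockn0 hW n (a + 2) h 0 (by omega)
        rw [Nat.add_zero, s2, head_eq n, h2L] at this
        exact fin2_zero_ne_one this.symm
      · exact h
    have s3 : cutn W n (a + 3) = q + 2 * L + 1 := by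
      rw [show a + 3 = (a + 2) + 1 from rfl, cutn_step hW, ha2, if_neg (by decide), s2]
    have hd' : d = a + 3 := by
      apply hinj
      rw [← hqd, s3]
    have ha3 : W (a + 3) = 0 := hd' ▸ hd0
    obtain ⟨p, hp0, hpa⟩ := rec1 hW a ha0 ha1 ha2 ha3
    refine ⟨p, hp0, ?_⟩
    show q = cutn W n (cut W p)
    rw [← hpa, ← hqa]

end W

end ChaconAux

theorem chacon_followed (W : ℕ → Fin 2) (hW : IsChaconInfWord W) (n j : ℕ)
    (hocc : OccursAtInf W (chaconWord n) j) :
    OccursAtInf W (chaconWord n) (j + (chaconWord n).length) ∨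
      (W (j + (chaconWord n).length) = 1 ∧
        OccursAtInf W (chaconWord n) (j + (chaconWord n).length + 1)) := by
  classical
  open ChaconAux in
  obtain ⟨p, hp0, hj⟩ := ChaconAux.recn hW n j hocc
  set L := (chaconWord n).length with hL
  have s1 : ChaconAux.cutn W n (p + 1) = j + L := by
    rw [ChaconAux.cutn_step hW, if_pos hp0, ← hj]
  rcases ChaconAux.fin2_cases (W (p + 1)) with h | h
  · left
    intro k hk
    have := ChaconAux.blockn0 hW n (p + 1) h k hk
    rw [s1] at this
    exact this
  · right
    constructor
    · have := ChaconAux.blockn1 hW n (p + 1) h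
      rw [s1] at this
      exact this
    · have hp2 : W (p + 2) = 0 := ChaconAux.W_no11 hW (p + 1) h
      have s2 : ChaconAux.cutn W n (p + 2) = j + L + 1 := by
        rw [show p + 2 = (p + 1) + 1 from rfl, ChaconAux.cutn_step hW,
          h, if_neg (by decide), s1]
      intro k hk
      have := ChaconAux.blockn0 hW n (p + 2) hp2 k hk
      rw [s2] at this
      exact this
end

section
/- For every natural number n, d₀(Wₙ1, 1Wₙ) = 1/2 + 1/(2·3ⁿ) and d₀(1Wₙ, Wₙ1) = 1/2 + 1/(2·3ⁿ), where Wₙ1 denotes Wₙ with a 1 appended and 1Wₙ denotes Wₙ with a 1 prepended. -/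
open Filter

/-! ### Auxiliary counting functions -/

/-- Count of indices `i` of `w` with `w i = 0` preceded by `1` (virtual predecessor `p`). -/
def cntA : Fin 2 → List (Fin 2) → ℕ
  | _, [] => 0
  | p, a :: t => (if p = 1 ∧ a = 0 then 1 else 0) + cntA a t

/-- Count of indices `i` of `p :: w` with value `0` followed by `1` (virtual successor `1`). -/
def cntB : Fin 2 → List (Fin 2) → ℕ
  | p, [] => if p = 0 then 1 else 0
  | p, a :: t => (if p = 0 ∧ a = 1 then 1 else 0) + cntB a t

lemma cardN1 : ∀ (w : List (Fin 2)) (p : Fin 2),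
    ((Finset.range (w.length + 1)).filter
      (fun i => (w ++ [1]).getD i 0 = 0 ∧ (p :: w).getD i 0 = 1)).card = cntA p w
  | [], p => by
    simp only [List.nil_append, List.length_nil, zero_add, Finset.range_one,
      Finset.filter_singleton]
    simp [cntA]
  | a :: t, p => by
    rw [Finset.card_filter, List.length_cons, Finset.sum_range_succ']
    simp only [List.cons_append, List.getD_cons_succ, List.getD_cons_zero]
    rw [← Finset.card_filter, cardN1 t a]
    simp only [cntA]
    rcases Fin.exists_fin_two.mp ⟨a, rfl⟩ with _|_ <;> by_cases hp : p = 1 <;>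
      by_cases ha : a = 0 <;> simp [hp, ha] <;> omega

lemma cardN2 : ∀ (w : List (Fin 2)) (p : Fin 2),
    ((Finset.range (w.length + 1)).filter
      (fun i => (p :: w).getD i 0 = 0 ∧ (w ++ [1]).getD i 0 = 1)).card = cntB p w
  | [], p => by
    simp only [List.nil_append, List.length_nil, zero_add, Finset.range_one,
      Finset.filter_singleton]
    by_cases hp : p = 0 <;> simp [cntB, hp]
  | a :: t, p => by
    rw [Finset.card_filter, List.length_cons, Finset.sum_range_succ']
    simp only [List.cons_append, List.getD_cons_succ, List.getD_cons_zero]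
    rw [← Finset.card_filter, cardN2 t a]
    simp only [cntB]
    by_cases hp : p = 0 <;> by_cases ha : a = 1 <;> simp [hp, ha] <;> omega

lemma cardD1 : ∀ (w : List (Fin 2)),
    ((Finset.range (w.length + 1)).filter
      (fun i => (w ++ [1]).getD i 0 = 0)).card = w.count 0
  | [] => by
    simp only [List.nil_append, List.length_nil, zero_add, Finset.range_one,
      Finset.filter_singleton]
    simp
  | a :: t => by
    rw [Finset.card_filter, List.length_cons, Finset.sum_range_succ']
    simp only [List.cons_append, List.getD_cons_succ, List.getD_cons_zero]
    rw [← Finset.card_filter, cardD1 t]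
    by_cases ha : a = 0 <;> simp [ha, List.count_cons] <;> omega

lemma cardD2 : ∀ (w : List (Fin 2)) (p : Fin 2),
    ((Finset.range (w.length + 1)).filter
      (fun i => (p :: w).getD i 0 = 0)).card = w.count 0 + (if p = 0 then 1 else 0)
  | [], p => by
    simp only [List.length_nil, zero_add, Finset.range_one, Finset.filter_singleton]
    by_cases hp : p = 0 <;> simp [hp]
  | a :: t, p => by
    rw [Finset.card_filter, List.length_cons, Finset.sum_range_succ']
    simp only [List.getD_cons_succ, List.getD_cons_zero]
    rw [← Finset.card_filter, cardD2 t a]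
    by_cases hp : p = 0 <;> by_cases ha : a = 0 <;>
      simp [hp, ha, List.count_cons] <;> omega

/-! ### Structure of Chacón words -/

lemma chacon_head (n : ℕ) : ∃ t, chaconWord n = 0 :: t := by
  induction n with
  | zero => exact ⟨[], rfl⟩
  | succ n ih =>
    obtain ⟨t, ht⟩ := ih
    exact ⟨(t ++ (0 :: t) ++ [1]) ++ (0 :: t), by simp [chaconWord, ht]⟩

lemma getLastD_append (s u : List (Fin 2)) (b : Fin 2) :
    ∀ p, (s ++ b :: u).getLastD p = (b :: u).getLastD 1 := by
  induction s with
  | nil =>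
    intro p
    rw [List.nil_append, List.getLastD_cons, List.getLastD_cons]
  | cons a s ih =>
    intro p
    rw [List.cons_append, List.getLastD_cons]
    exact ih a

lemma chacon_last (n : ℕ) : ∀ p, (chaconWord n).getLastD p = 0 := by
  induction n with
  | zero => intro p; simp [chaconWord]
  | succ n ih =>
    intro p
    obtain ⟨t, ht⟩ := chacon_head n
    rw [chaconWord, ht]
    have : ((0 :: t) ++ (0 :: t) ++ [1] ++ (0 :: t))
        = ((0 :: t) ++ (0 :: t) ++ [1]) ++ (0 :: t) := by simp
    rw [this, getLastD_append, ← ht]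
    exact ih 1

/-! ### Recursions for the counts -/

lemma cntA_append : ∀ (u : List (Fin 2)) (v : List (Fin 2)) (p : Fin 2),
    cntA p (u ++ v) = cntA p u + cntA (u.getLastD p) v
  | [], v, p => by simp [cntA]
  | a :: t, v, p => by
    rw [List.cons_append, List.getLastD_cons]
    simp only [cntA, List.append_eq, cntA_append t v a]
    omega

lemma cntB_split : ∀ (s : List (Fin 2)) (q : Fin 2) (v : List (Fin 2)) (p : Fin 2),
    cntB p (s ++ q :: v) + (if q = 0 then 1 else 0)
      = cntB p (s ++ [q]) + cntB q v
  | [], q, v, p => by simp [cntB]; omega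
  | a :: s, q, v, p => by
    simp only [List.cons_append, cntB, List.append_eq]
    have := cntB_split s q v a
    omega

lemma cntB_concat_one : ∀ (s : List (Fin 2)) (p : Fin 2),
    cntB p (s ++ [1]) = cntB p s
  | [], p => by simp [cntB]
  | a :: s, p => by
    simp only [List.cons_append, cntB, List.append_eq, cntB_concat_one s a]

lemma cntB_concat_zero : ∀ (s : List (Fin 2)) (p : Fin 2),
    (∀ d, s.getLastD d = 0) → cntB p (s ++ [0]) = cntB p s
  | [], p, h => by simpa using h 1
  | [a], p, h => by
    have ha : a = 0 := by simpa using h 1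
    subst ha
    simp [cntB]
  | a :: b :: s, p, h => by
    have h' : ∀ d, (b :: s).getLastD d = 0 := by
      intro d
      have h1 := h 1
      simp only [List.getLastD, List.getLast?_cons_cons] at h1 ⊢
      exact h1
    have key := cntB_concat_zero (b :: s) a h'
    simp only [List.cons_append, cntB, List.append_eq] at key ⊢
    omega

lemma chacon_count (n : ℕ) : (chaconWord n).count 0 = 3 ^ n := by
  induction n with
  | zero => simp [chaconWord]
  | succ n ih => simp [chaconWord, List.count_append, ih, pow_succ]; ring

lemma cntA_chacon (n : ℕ) : 2 * cntA 1 (chaconWord n) = 3 ^ n + 1 := by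
  induction n with
  | zero => simp [chaconWord, cntA]
  | succ n ih =>
    obtain ⟨t, ht⟩ := chacon_head n
    have hlast := chacon_last n
    have h0 : cntA 0 (chaconWord n) + 1 = cntA 1 (chaconWord n) := by
      rw [ht]; simp [cntA]; omega
    have e1 : cntA 1 (chaconWord (n + 1))
        = cntA 1 (chaconWord n ++ chaconWord n ++ [1]) + cntA 1 (chaconWord n) := by
      rw [chaconWord, cntA_append]
      congr 1
      rw [List.getLastD_concat]
    have e2 : cntA 1 (chaconWord n ++ chaconWord n ++ [1])
        = cntA 1 (chaconWord n ++ chaconWord n) := by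
      rw [cntA_append]
      have : cntA ((chaconWord n ++ chaconWord n).getLastD 1) [1] = 0 := by
        rcases Fin.exists_fin_two.mp
          ⟨(chaconWord n ++ chaconWord n).getLastD 1, rfl⟩ with h | h <;>
          rw [h] <;> simp [cntA]
      omega
    have e3 : cntA 1 (chaconWord n ++ chaconWord n)
        = cntA 1 (chaconWord n) + cntA 0 (chaconWord n) := by
      rw [cntA_append, hlast 1]
    rw [e1, e2, e3, pow_succ]
    omega

lemma cntB_chacon (n : ℕ) : 2 * cntB 1 (chaconWord n) = 3 ^ n + 1 := by
  induction n with
  | zero => simp [chaconWord, cntB]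
  | succ n ih =>
    obtain ⟨t, ht⟩ := chacon_head n
    have hlast : ∀ d, (chaconWord n).getLastD d = 0 := chacon_last n
    have hw : chaconWord (n + 1)
        = chaconWord n ++ (0 : Fin 2) :: (t ++ (1 : Fin 2) :: chaconWord n) := by
      rw [chaconWord]
      conv_lhs => rw [ht]
      rw [ht]
      simp
    have s1 := cntB_split (chaconWord n) 0 (t ++ (1 : Fin 2) :: chaconWord n) 1
    have s2 := cntB_split t 1 (chaconWord n) 0
    have c1 : cntB 1 (chaconWord n ++ [0]) = cntB 1 (chaconWord n) :=
      cntB_concat_zero _ _ hlast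
    have c2 : cntB 0 (t ++ [1]) = cntB 0 t := cntB_concat_one t 0
    have c3 : cntB 0 t = cntB 1 (chaconWord n) := by
      rw [ht]; simp [cntB]
    have hq0 : (if (0 : Fin 2) = 0 then 1 else 0) = 1 := by simp
    have hq1 : (if (1 : Fin 2) = 0 then (1:ℕ) else 0) = 0 := by simp
    rw [hq0] at s1; rw [hq1] at s2
    rw [hw, pow_succ]
    omega

theorem hamming0_shift (n : ℕ) :
    hamming0 (chaconWord n ++ [1]) ([1] ++ chaconWord n) = 1 / 2 + 1 / (2 * 3 ^ n) ∧
      hamming0 ([1] ++ chaconWord n) (chaconWord n ++ [1]) = 1 / 2 + 1 / (2 * 3 ^ n) := by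
  have h3 : (3 : ℝ) ^ n ≠ 0 := by positivity
  have hA : (2 : ℝ) * (cntA 1 (chaconWord n) : ℝ) = 3 ^ n + 1 := by
    exact_mod_cast congrArg (Nat.cast : ℕ → ℝ) (cntA_chacon n)
  have hB : (2 : ℝ) * (cntB 1 (chaconWord n) : ℝ) = 3 ^ n + 1 := by
    exact_mod_cast congrArg (Nat.cast : ℕ → ℝ) (cntB_chacon n)
  have hc : ((chaconWord n).count 0 : ℝ) = 3 ^ n := by
    exact_mod_cast congrArg (Nat.cast : ℕ → ℝ) (chacon_count n)
  constructor
  · unfold hamming0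
    simp only [List.singleton_append, List.length_append, List.length_singleton]
    rw [cardN1, cardD1, hc]
    have : (cntA 1 (chaconWord n) : ℝ) = (3 ^ n + 1) / 2 := by linarith
    rw [this]
    field_simp
  · unfold hamming0
    simp only [List.singleton_append, List.length_cons]
    rw [cardN2, cardD2]
    simp only [show ((1 : Fin 2) = 0) = False by simp, if_false, add_zero]
    rw [hc]
    have : (cntB 1 (chaconWord n) : ℝ) = (3 ^ n + 1) / 2 := by linarith
    rw [this]
    field_simp
end

section
/- Fix i > 0 and for each n let αₙ denote the subword of W of length |Wₙ| beginning at position i. If the sequence n ↦ d₀(Wₙ, αₙ) converges to a real number L, then the sequence n ↦ d(Wₙ, αₙ) converges to (4/3)·L. -/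
open Filter

/-!
Let `A` (resp. `B`) count the positions where `Wₙ` reads `0` and `αₙ` reads `1` (resp. `1`
and `0`). Since `Wₙ` has `3ⁿ` zeros and length `(3ⁿ⁺¹ - 1) / 2`, we have `d₀ = A / 3ⁿ` and
`d = (A + B) / |Wₙ|`, so it suffices that `|A - B| ≤ 1`. Comparing the numbers of `1`s in `Wₙ`
and `αₙ` gives `A - B = #₁αₙ - #₁Wₙ`. Now `W_{n+m}` is `W_m` with every `0` replaced by the
block `Wₙ`, and `W_m` has no two adjacent `1`s, so a factor of `W` of length `|Wₙ|` consists of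
a (possibly empty) suffix of a block, at most one separating `1`, and a prefix of the next block.
As the prefix counts `p t` of `1`s in `Wₙ` satisfy `p t ≤ p (t + 1) ≤ p t + 1`, such a factor
contains `#₁Wₙ` or `#₁Wₙ + 1` ones.
-/

lemma List.count_take_succ_le {α : Type*} [BEq α] (l : List α) (a : α) (t : ℕ) :
    (l.take (t + 1)).count a ≤ (l.take t).count a + 1 := by
  rw [List.take_add, List.count_append]
  have : ((l.drop t).take 1).length ≤ 1 := by simp
  have := List.count_le_length (a := a) (l := (l.drop t).take 1)
  omega

lemma List.count_take_le_count_take {α : Type*} [BEq α] (l : List α) (a : α) {s t : ℕ}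
    (h : s ≤ t) : (l.take s).count a ≤ (l.take t).count a :=
  (List.take_sublist_take_left h).count_le a

lemma List.card_filter_getD_eq_count {α : Type*} [DecidableEq α] (l : List α) (d c : α) :
    ((Finset.range l.length).filter fun k => l.getD k d = c).card = l.count c := by
  induction l with
  | nil => simp
  | cons a t ih =>
    rw [Finset.card_filter] at ih ⊢
    rw [List.length_cons, Finset.sum_range_succ']
    simp only [List.getD_cons_succ, List.getD_cons_zero]
    rw [ih, List.count_cons]
    by_cases h : a = c <;> simp [h]

def pairCount (α β : List (Fin 2)) (a b : Fin 2) : ℕ :=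
  ((Finset.range α.length).filter fun k => α.getD k 0 = a ∧ β.getD k 0 = b).card

lemma hamming_eq_pairCount (α β : List (Fin 2)) :
    hamming α β = ((pairCount α β 0 1 + pairCount α β 1 0 : ℕ) : ℝ) / α.length := by
  rw [hamming, pairCount, pairCount]
  congr 2
  simp only [Finset.card_filter, ← Finset.sum_add_distrib]
  refine Finset.sum_congr rfl fun k _ => ?_
  generalize α.getD k 0 = a, β.getD k 0 = b
  revert a b
  decide

lemma hamming0_eq_pairCount (α β : List (Fin 2)) :
    hamming0 α β = (pairCount α β 0 1 : ℝ) / α.count 0 := by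
  rw [hamming0, pairCount, List.card_filter_getD_eq_count]

lemma pairCount_add_count_one {α β : List (Fin 2)} (h : α.length = β.length) :
    pairCount α β 0 1 + α.count 1 = pairCount α β 1 0 + β.count 1 := by
  rw [pairCount, pairCount, ← List.card_filter_getD_eq_count α 0,
    ← List.card_filter_getD_eq_count β 0, ← h]
  simp only [Finset.card_filter, ← Finset.sum_add_distrib]
  refine Finset.sum_congr rfl fun k _ => ?_
  generalize α.getD k 0 = a, β.getD k 0 = b
  revert a b
  decide

lemma tendsto_div_pow_of_abs_sub_le {r L : ℝ} (hr : 1 < r) {a b : ℕ → ℝ}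
    (ha : Tendsto (fun n => a n / r ^ n) atTop (nhds L)) (hab : ∀ n, |a n - b n| ≤ 1) :
    Tendsto (fun n => b n / r ^ n) atTop (nhds L) := by
  have hdiff : Tendsto (fun n => (a n - b n) / r ^ n) atTop (nhds 0) := by
    refine squeeze_zero_norm (fun n => ?_) (tendsto_pow_atTop_nhds_zero_of_lt_one
      (inv_nonneg.mpr (by linarith)) (inv_lt_one_of_one_lt₀ hr))
    have hrn : 0 < r ^ n := pow_pos (by linarith) n
    rw [Real.norm_eq_abs, abs_div, abs_of_pos hrn, inv_pow, ← one_div]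
    exact div_le_div_of_nonneg_right (hab n) hrn.le
  simpa using (ha.sub hdiff).congr fun n => by ring

namespace Chacon

def subst (n : ℕ) (v : List (Fin 2)) : List (Fin 2) :=
  v.flatMap fun c => if c = 0 then chaconWord n else [1]

@[simp] lemma subst_nil (n : ℕ) : subst n [] = [] := rfl

@[simp] lemma subst_cons (n : ℕ) (c : Fin 2) (v : List (Fin 2)) :
    subst n (c :: v) = (if c = 0 then chaconWord n else [1]) ++ subst n v := rfl

lemma subst_append (n : ℕ) (v w : List (Fin 2)) :
    subst n (v ++ w) = subst n v ++ subst n w :=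
  List.flatMap_append

lemma chaconWord_add (n m : ℕ) : chaconWord (n + m) = subst n (chaconWord m) := by
  induction m with
  | zero => simp [chaconWord, subst]
  | succ m ih => simp [chaconWord, ih, subst_append]

lemma length_chaconWord_succ (n : ℕ) :
    (chaconWord (n + 1)).length = 3 * (chaconWord n).length + 1 := by
  simp only [chaconWord, List.length_append, List.length_singleton]
  ring

lemma two_mul_length_chaconWord_add_one (n : ℕ) :
    2 * (chaconWord n).length + 1 = 3 ^ (n + 1) := by
  induction n with
  | zero => simp [chaconWord]
  | succ n ih => rw [length_chaconWord_succ, pow_succ]; omega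

lemma length_chaconWord_pos (n : ℕ) : 0 < (chaconWord n).length := by
  have := two_mul_length_chaconWord_add_one n
  have : 3 ≤ 3 ^ (n + 1) := Nat.le_self_pow (by omega) 3
  omega

lemma length_chaconWord_add_le (n m : ℕ) :
    (chaconWord n).length + m ≤ (chaconWord (n + m)).length := by
  induction m with
  | zero => simp
  | succ m ih => rw [show n + (m + 1) = n + m + 1 by omega, length_chaconWord_succ]; omega

lemma count_zero_chaconWord (n : ℕ) : (chaconWord n).count 0 = 3 ^ n := by
  induction n with
  | zero => rfl
  | succ n ih => simp [chaconWord, ih, pow_succ]; ring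

lemma head?_chaconWord (n : ℕ) : (chaconWord n).head? = some 0 := by
  induction n with
  | zero => rfl
  | succ n ih => simp [chaconWord, List.head?_append, ih]

lemma getLast?_chaconWord (n : ℕ) : (chaconWord n).getLast? = some 0 := by
  induction n with
  | zero => rfl
  | succ n ih => simp [chaconWord, List.getLast?_cons, ih]

abbrev NoDoubleOne (v : List (Fin 2)) : Prop :=
  v.IsChain fun a b => a = 0 ∨ b = 0

lemma noDoubleOne_chaconWord (n : ℕ) : NoDoubleOne (chaconWord n) := by
  induction n with
  | zero => exact List.isChain_singleton _
  | succ n ih =>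
    simp only [NoDoubleOne, chaconWord, List.isChain_append, List.isChain_singleton,
      List.getLast?_append, getLast?_chaconWord, head?_chaconWord]
    simp_all

section Windows

variable (n : ℕ)

lemma count_take_subst_of_head?_ne_one {v : List (Fin 2)} (hv : v.head? ≠ some 1) {t : ℕ}
    (ht : t ≤ (chaconWord n).length) (htv : t ≤ (subst n v).length) :
    ((subst n v).take t).count 1 = ((chaconWord n).take t).count 1 := by
  rcases v with _ | ⟨c, w⟩
  · simp_all
  · obtain rfl : c = 0 := by
      simp only [List.head?_cons, ne_eq, Option.some.injEq] at hv; omega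
    simp [List.take_append_of_le_length ht]

lemma count_take_subst_bounds {v : List (Fin 2)} (hv : NoDoubleOne v) {t : ℕ}
    (ht : t ≤ (chaconWord n).length) (htv : t ≤ (subst n v).length) :
    ((chaconWord n).take t).count 1 ≤ ((subst n v).take t).count 1 ∧
      ((subst n v).take t).count 1 ≤ ((chaconWord n).take t).count 1 + 1 := by
  rcases v with _ | ⟨c, w⟩
  · simp_all
  obtain rfl | rfl : c = 0 ∨ c = 1 := by omega
  · rw [count_take_subst_of_head?_ne_one n (by simp) ht htv]; omega
  rcases t with _ | s
  · simp
  have hw : w.head? ≠ some 1 := by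
    rcases w with _ | ⟨x, w⟩
    · simp
    · obtain rfl : x = 0 := by simpa using (List.isChain_cons_cons.mp hv).1
      simp
  have hs : ((subst n (1 :: w)).take (s + 1)).count 1 = ((subst n w).take s).count 1 + 1 := by
    simp
  rw [hs, count_take_subst_of_head?_ne_one n hw (by omega) (by simp at htv; omega)]
  have := List.count_take_succ_le (chaconWord n) 1 s
  have := List.count_take_le_count_take (chaconWord n) 1 (Nat.le_add_right s 1)
  omega

theorem count_window_subst_bounds {v : List (Fin 2)} (hv : NoDoubleOne v) {i : ℕ}
    (hi : i + (chaconWord n).length ≤ (subst n v).length) :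
    (chaconWord n).count 1 ≤ (((subst n v).drop i).take (chaconWord n).length).count 1 ∧
      (((subst n v).drop i).take (chaconWord n).length).count 1 ≤ (chaconWord n).count 1 + 1 := by
  induction v generalizing i with
  | nil =>
    have := length_chaconWord_pos n
    simp only [subst_nil, List.length_nil] at hi
    omega
  | cons c w ih =>
    set head : List (Fin 2) := if c = 0 then chaconWord n else [1] with hhead
    have hsplit : subst n (c :: w) = head ++ subst n w := rfl
    by_cases hlong : head.length ≤ i
    · rw [hsplit, List.drop_append, List.drop_eq_nil_of_le hlong, List.nil_append]
      exact ih hv.tail (by rw [hsplit, List.length_append] at hi; omega)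
    obtain rfl | rfl : c = 0 ∨ c = 1 := by omega
    · simp only [hhead, if_pos] at hsplit hlong
      have hi' : i ≤ (subst n w).length := by rw [hsplit, List.length_append] at hi; omega
      have hwindow : ((subst n (0 :: w)).drop i).take (chaconWord n).length
          = (chaconWord n).drop i ++ (subst n w).take i := by
        rw [hsplit, List.drop_append_of_le_length (by omega), List.take_append,
          List.take_of_length_le (by simp), List.length_drop, Nat.sub_sub_self (by omega)]
      have hcount := congrArg (List.count 1) (List.take_append_drop i (chaconWord n))
      rw [List.count_append] at hcount
      have := count_take_subst_bounds n (v := w) hv.tail (by omega) hi'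
      rw [hwindow, List.count_append]
      omega
    · obtain rfl : i = 0 := by simp [hhead] at hlong; omega
      simpa using count_take_subst_bounds n hv le_rfl (by omega)

end Windows

lemma subword_eq_take_drop {W : ℕ → Fin 2} (hW : IsChaconInfWord W) {i L m : ℕ}
    (h : i + L ≤ (chaconWord m).length) :
    subword W i L = ((chaconWord m).drop i).take L := by
  refine List.ext_getElem (by simp [subword]; omega) fun k hk _ => ?_
  simp only [subword, List.length_map, List.length_range] at hk
  have hik : i + k < (chaconWord m).length := by omega
  simp [subword, hW m (i + k) hik, List.getElem?_eq_getElem hik]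

theorem count_subword_bounds {W : ℕ → Fin 2} (hW : IsChaconInfWord W) (i n : ℕ) :
    (chaconWord n).count 1 ≤ (subword W i (chaconWord n).length).count 1 ∧
      (subword W i (chaconWord n).length).count 1 ≤ (chaconWord n).count 1 + 1 := by
  have hlen := length_chaconWord_add_le n i
  rw [subword_eq_take_drop hW (m := n + i) (by omega), chaconWord_add]
  exact count_window_subst_bounds n (noDoubleOne_chaconWord i) (by rw [← chaconWord_add]; omega)

lemma abs_pairCount_sub_le {W : ℕ → Fin 2} (hW : IsChaconInfWord W) (i n : ℕ) :
    |(pairCount (chaconWord n) (subword W i (chaconWord n).length) 0 1 : ℝ) -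
      pairCount (chaconWord n) (subword W i (chaconWord n).length) 1 0| ≤ 1 := by
  have hbal := pairCount_add_count_one (α := chaconWord n)
    (β := subword W i (chaconWord n).length) (by simp [subword])
  have := count_subword_bounds hW i n
  set A := pairCount (chaconWord n) (subword W i (chaconWord n).length) 0 1
  set B := pairCount (chaconWord n) (subword W i (chaconWord n).length) 1 0
  have h₁ : (A : ℝ) ≤ B + 1 := by exact_mod_cast (by omega : A ≤ B + 1)
  have h₂ : (B : ℝ) ≤ A := by exact_mod_cast (by omega : B ≤ A)
  rw [abs_le]
  constructor <;> linarith

lemma tendsto_pow_div_length_chaconWord :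
    Tendsto (fun n => (3 : ℝ) ^ n / (chaconWord n).length) atTop (nhds (2 / 3)) := by
  have hden : Tendsto (fun n : ℕ => 3 - (3 : ℝ)⁻¹ ^ n) atTop (nhds 3) := by
    simpa using tendsto_const_nhds.sub
      (tendsto_pow_atTop_nhds_zero_of_lt_one (by norm_num : (0 : ℝ) ≤ 3⁻¹) (by norm_num))
  refine (tendsto_const_nhds.div hden (by norm_num)).congr fun n => ?_
  have hlen : (2 * (chaconWord n).length + 1 : ℝ) = 3 ^ n * 3 := by
    exact_mod_cast (pow_succ 3 n) ▸ two_mul_length_chaconWord_add_one n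
  have hℓ : (0 : ℝ) < (chaconWord n).length := by exact_mod_cast length_chaconWord_pos n
  have h3 : (1 : ℝ) ≤ 3 ^ n := one_le_pow₀ (by norm_num)
  simp only [Pi.div_apply, inv_pow]
  field_simp
  rw [div_eq_one_iff_eq (by linarith)]
  linarith

end Chacon

open Chacon in
theorem chacon_hamming_limit_general (W : ℕ → Fin 2) (hW : IsChaconInfWord W) (i : ℕ)
    (L : ℝ)
    (hconv : Tendsto (fun n => hamming0 (chaconWord n) (subword W i (chaconWord n).length))
      atTop (nhds L)) :
    Tendsto (fun n => hamming (chaconWord n) (subword W i (chaconWord n).length))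
      atTop (nhds (4 / 3 * L)) := by
  set α := fun n => subword W i (chaconWord n).length
  have hA : Tendsto (fun n => (pairCount (chaconWord n) (α n) 0 1 : ℝ) / 3 ^ n)
      atTop (nhds L) := by
    simpa [hamming0_eq_pairCount, count_zero_chaconWord] using hconv
  have hB : Tendsto (fun n => (pairCount (chaconWord n) (α n) 1 0 : ℝ) / 3 ^ n)
      atTop (nhds L) :=
    tendsto_div_pow_of_abs_sub_le (by norm_num) hA (abs_pairCount_sub_le hW i)
  convert (hA.add hB).mul tendsto_pow_div_length_chaconWord using 2 with n
  · have := length_chaconWord_pos n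
    rw [hamming_eq_pairCount]
    field_simp
    push_cast
    ring
  · ring

theorem chacon_hamming_limit (W : ℕ → Fin 2) (hW : IsChaconInfWord W) (i : ℕ) (hi : 0 < i)
    (L : ℝ)
    (hconv : Tendsto (fun n => hamming0 (chaconWord n) (subword W i (chaconWord n).length))
      atTop (nhds L)) :
    Tendsto (fun n => hamming (chaconWord n) (subword W i (chaconWord n).length))
      atTop (nhds (4 / 3 * L)) :=
  chacon_hamming_limit_general W hW i L hconv
end
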